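/- There is a satisfiable HyperCTL* sentence φ_𝔠 such that every model of φ_𝔠 has at least 𝔠 vertices; in fact, in every model of φ_𝔠 the initial vertex has at least 𝔠 many successors (for each set A ⊆ ℕ there is a path ρ_A starting at a successor of the initial vertex whose i-th vertex is labelled with 1 if i ∈ A and with 0 otherwise, and distinct sets A ≠ B yield distinct initial vertices ρ_A(0) ≠ ρ_B(0)). -/

import Mathlib

/-! ### Transition systems and HyperCTL* -/

/-- A transition system over `AP`: every vertex has an outgoing edge. -/
structure TS (AP : Type) : Type 1 where
  V : Type
  E : V → V → Prop
  vI : V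
  lab : V → Set AP
  succ : ∀ v, ∃ w, E v w

/-- A path through a transition system. -/
def TS.IsPath {AP : Type} (S : TS AP) (ρ : ℕ → S.V) : Prop :=
  ∀ i, S.E (ρ i) (ρ (i + 1))

/-- HyperCTL* formulas; path variables are natural numbers. -/
inductive CTL (AP : Type) : Type where
  | atom : AP → ℕ → CTL AP
  | neg  : CTL AP → CTL AP
  | disj : CTL AP → CTL AP → CTL AP
  | next : CTL AP → CTL AP
  | untl : CTL AP → CTL AP → CTL AP
  | ex   : ℕ → CTL AP → CTL AP
  | all  : ℕ → CTL AP → CTL AP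

/-- Semantics of HyperCTL* w.r.t. a path assignment `As` and the variable `r`
most recently added to the assignment: quantified paths start at the first
vertex of the most recently assigned path. -/
def CTL.sat {AP : Type} (S : TS AP) : CTL AP → (ℕ → ℕ → S.V) → ℕ → Prop
  | .atom a x, As, _ => a ∈ S.lab (As x 0)
  | .neg φ, As, r => ¬ φ.sat S As r
  | .disj φ ψ, As, r => φ.sat S As r ∨ ψ.sat S As r
  | .next φ, As, r => φ.sat S (fun x i => As x (i + 1)) r
  | .untl φ ψ, As, r =>
      ∃ j, ψ.sat S (fun x i => As x (i + j)) r ∧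
        ∀ j' < j, φ.sat S (fun x i => As x (i + j')) r
  | .ex x φ, As, r => ∃ ρ : ℕ → S.V, S.IsPath ρ ∧ ρ 0 = As r 0 ∧
      φ.sat S (Function.update As x ρ) x
  | .all x φ, As, r => ∀ ρ : ℕ → S.V, S.IsPath ρ → ρ 0 = As r 0 →
      φ.sat S (Function.update As x ρ) x

def CTL.freeVars {AP : Type} : CTL AP → Set ℕ
  | .atom _ x => {x}
  | .neg φ => φ.freeVars
  | .disj φ ψ => φ.freeVars ∪ ψ.freeVars
  | .next φ => φ.freeVars
  | .untl φ ψ => φ.freeVars ∪ ψ.freeVars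
  | .ex x φ => φ.freeVars \ {x}
  | .all x φ => φ.freeVars \ {x}

/-- Every temporal operator occurs in the scope of a path quantifier. -/
def CTL.guarded {AP : Type} : CTL AP → Prop
  | .atom _ _ => True
  | .neg φ => φ.guarded
  | .disj φ ψ => φ.guarded ∧ ψ.guarded
  | .next _ => False
  | .untl _ _ => False
  | .ex _ _ => True
  | .all _ _ => True

/-- A HyperCTL* sentence: no free variables and all temporal operators occur
under a path quantifier. -/
def CTL.IsSentence {AP : Type} (φ : CTL AP) : Prop := φ.freeVars = ∅ ∧ φ.guarded

/-- `S ⊨ φ`: satisfaction w.r.t. the empty assignment, i.e. quantification of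
the first path starts at the initial vertex (for sentences the choice of the
initial dummy path is irrelevant). -/
def CModels {AP : Type} (S : TS AP) (φ : CTL AP) : Prop :=
  ∀ ρ : ℕ → S.V, S.IsPath ρ → ρ 0 = S.vI → φ.sat S (fun _ => ρ) 0

/-- The atomic propositions `fbt`, `pset`, `0`, `1`. -/
inductive AP4 : Type where
  | fbt | pset | zero | one
deriving DecidableEq

namespace HyperAux

def a0 (x : ℕ) : CTL AP4 := .atom .zero x
def a1 (x : ℕ) : CTL AP4 := .atom .one x
def af (x : ℕ) : CTL AP4 := .atom .fbt x
def ap (x : ℕ) : CTL AP4 := .atom .pset x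
def cj (φ ψ : CTL AP4) : CTL AP4 := .neg (.disj (.neg φ) (.neg ψ))
def im (φ ψ : CTL AP4) : CTL AP4 := .disj (.neg φ) ψ
def iff' (φ ψ : CTL AP4) : CTL AP4 := cj (im φ ψ) (im ψ φ)
def tru : CTL AP4 := .disj (af 1) (.neg (af 1))
def Gl (φ : CTL AP4) : CTL AP4 := .neg (.untl tru (.neg φ))

def C1 : CTL AP4 := .all 1 (.next (Gl (cj (.disj (a0 1) (a1 1)) (.neg (cj (a0 1) (a1 1))))))
def C2 : CTL AP4 := .all 1 (.next (Gl (im (af 1)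
  (cj (.ex 2 (.next (cj (af 2) (a0 2)))) (.ex 3 (.next (cj (af 3) (a1 3))))))))
def C3 : CTL AP4 := cj (.ex 2 (.next (cj (af 2) (a0 2)))) (.ex 3 (.next (cj (af 3) (a1 3))))
def C4 : CTL AP4 := .all 1 (im (.next (Gl (af 1)))
  (.ex 2 (cj (.next (ap 2)) (.next (Gl (cj (iff' (a0 1) (a0 2)) (iff' (a1 1) (a1 2))))))))
def C5 : CTL AP4 := .all 1 (.next (im (ap 1) (.all 2 (.all 3 (Gl (iff' (a1 2) (a1 3)))))))
def phi : CTL AP4 := cj C1 (cj C2 (cj C3 (cj C4 C5)))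

variable {S : TS AP4}

lemma tru_sat (As : ℕ → ℕ → S.V) (r : ℕ) : tru.sat S As r := by
  simp only [tru, af, CTL.sat]; exact em _

@[simp] lemma sat_cj (φ ψ : CTL AP4) (As : ℕ → ℕ → S.V) (r : ℕ) :
    (cj φ ψ).sat S As r ↔ φ.sat S As r ∧ ψ.sat S As r := by
  simp only [cj, CTL.sat, not_or, not_not]

@[simp] lemma sat_im (φ ψ : CTL AP4) (As : ℕ → ℕ → S.V) (r : ℕ) :
    (im φ ψ).sat S As r ↔ (φ.sat S As r → ψ.sat S As r) := by
  simp only [im, CTL.sat]; tauto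

@[simp] lemma sat_iff' (φ ψ : CTL AP4) (As : ℕ → ℕ → S.V) (r : ℕ) :
    (iff' φ ψ).sat S As r ↔ (φ.sat S As r ↔ ψ.sat S As r) := by
  simp only [iff', sat_cj, sat_im]; tauto

@[simp] lemma sat_Gl (φ : CTL AP4) (As : ℕ → ℕ → S.V) (r : ℕ) :
    (Gl φ).sat S As r ↔ ∀ j, φ.sat S (fun x i => As x (i + j)) r := by
  simp only [Gl, CTL.sat, not_exists, not_and]
  constructor
  · intro h j
    by_contra hc
    exact h j hc (fun j' _ => em _)
  · intro h j hc _
    exact hc (h j)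


lemma exists_path (S : TS AP4) (v : S.V) : ∃ ρ : ℕ → S.V, S.IsPath ρ ∧ ρ 0 = v := by
  classical
  choose f hf using S.succ
  refine ⟨fun n => f^[n] v, fun i => ?_, rfl⟩
  show S.E (f^[i] v) (f^[i+1] v)
  rw [Function.iterate_succ_apply']
  exact hf _

lemma splice (S : TS AP4) {τ τ' : ℕ → S.V} (hτ : S.IsPath τ) (hτ' : S.IsPath τ')
    (n : ℕ) (he : τ' 0 = τ n) :
    ∃ ρ, S.IsPath ρ ∧ (∀ i ≤ n, ρ i = τ i) ∧ ∀ i, ρ (n + i) = τ' i := by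
  refine ⟨fun i => if i ≤ n then τ i else τ' (i - n), ?_, ?_, ?_⟩
  · intro i
    by_cases h1 : i + 1 ≤ n
    · have h2 : i ≤ n := by omega
      simp only [h1, h2, if_pos]
      exact hτ i
    · by_cases h2 : i ≤ n
      · have h3 : i = n := by omega
        subst h3
        have h4 : i + 1 - i = 1 := by omega
        simp only [h2, if_pos, h1, if_neg, h4, ite_false, if_false]
        rw [← he]
        simpa using hτ' 0
      · have h3 : i + 1 - n = (i - n) + 1 := by omega
        simp only [h1, h2, if_neg, ite_false, if_false, h3]
        exact hτ' (i - n)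
  · intro i h; simp [h]
  · intro i
    rcases Nat.eq_zero_or_pos i with rfl | hi
    · simpa using he.symm
    · have h1 : ¬ (n + i ≤ n) := by omega
      simp [h1]

lemma chain {α : Type} (Q : ℕ → (ℕ → α) → Prop) (ρb : ℕ → α) (h0 : Q 0 ρb)
    (step : ∀ n ρ, Q n ρ → ∃ ρ', Q (n+1) ρ' ∧ ∀ i ≤ n+1, ρ' i = ρ i) :
    ∃ σ : ℕ → α, ∀ n, ∃ ρ, Q n ρ ∧ ∀ i ≤ n+1, σ i = ρ i := by
  classical
  let F : ∀ n : ℕ, {ρ : ℕ → α // Q n ρ} := fun n =>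
    Nat.rec ⟨ρb, h0⟩ (fun m p => ⟨(step m p.1 p.2).choose, (step m p.1 p.2).choose_spec.1⟩) n
  have hF : ∀ m, ∀ i ≤ m + 1, (F (m+1)).1 i = (F m).1 i := fun m =>
    (step m (F m).1 (F m).2).choose_spec.2
  have mono : ∀ n m, n ≤ m → ∀ i ≤ n + 1, (F m).1 i = (F n).1 i := by
    intro n m h
    induction h with
    | refl => intro i _; rfl
    | @step m' h ih =>
      intro i hi
      rw [hF m' i (le_trans hi (Nat.succ_le_succ h)), ih i hi]
  refine ⟨fun n => (F n).1 n, fun n => ⟨(F n).1, (F n).2, fun i hi => ?_⟩⟩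
  rcases Nat.lt_or_ge i (n+1) with h | h
  · exact (mono i n (by omega) i (by omega)).symm
  · have hh : i = n + 1 := by omega
    subst hh
    exact mono n (n+1) (by omega) _ (by omega)
/-! ### The concrete model -/

def MV : Type := Option ((Bool × List Bool) ⊕ (Set ℕ × ℕ))

def mE : MV → MV → Prop
  | none, some (.inl (_, l)) => l = []
  | none, some (.inr (_, i)) => i = 0
  | some (.inl (b, l)), some (.inl (_, l')) => l' = b :: l
  | some (.inr (A, i)), some (.inr (A', i')) => A' = A ∧ i' = i + 1
  | _, _ => False

def mstep : MV → MV
  | none => some (.inl (false, []))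
  | some (.inl (b, l)) => some (.inl (false, b :: l))
  | some (.inr (A, i)) => some (.inr (A, i + 1))

def mlab : MV → Set AP4
  | none => ∅
  | some (.inl (b, _)) => {x | x = .fbt ∨ (x = .one ∧ b = true) ∨ (x = .zero ∧ b = false)}
  | some (.inr (A, i)) => {x | x = .pset ∨ (x = .one ∧ i ∈ A) ∨ (x = .zero ∧ i ∉ A)}

lemma mE_step (v : MV) : mE v (mstep v) := by
  rcases v with _ | (⟨b, l⟩ | ⟨A, i⟩) <;> simp [mE, mstep]

def MS : TS AP4 where
  V := MV
  E := mE
  vI := none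
  lab := mlab
  succ := fun v => ⟨mstep v, mE_step v⟩

lemma mE_ne_none {u w : MV} (h : mE u w) : w ≠ none := by
  rintro rfl
  rcases u with _ | (⟨b, l⟩ | ⟨A, i⟩) <;> exact h

lemma cons_path {v w : MV} (h : mE v w) :
    ∃ τ : ℕ → MS.V, MS.IsPath τ ∧ τ 0 = v ∧ τ 1 = w := by
  refine ⟨fun n => Nat.casesOn n v (fun m => mstep^[m] w), fun i => ?_, rfl, rfl⟩
  cases i with
  | zero => exact h
  | succ m =>
    show mE (mstep^[m] w) (mstep^[m+1] w)
    rw [Function.iterate_succ_apply']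
    exact mE_step _

lemma inr_path {ρ : ℕ → MS.V} (h : MS.IsPath ρ) (A : Set ℕ) (i : ℕ)
    (h0 : ρ 0 = some (.inr (A, i))) : ∀ j, ρ j = some (.inr (A, i + j)) := by
  intro j
  induction j with
  | zero => simpa using h0
  | succ m ih =>
    have he := h m
    rw [ih] at he
    rcases hm : ρ (m + 1) with _ | (⟨b, l⟩ | ⟨A', i'⟩) <;> rw [hm] at he
    · exact False.elim he
    · exact False.elim he
    · obtain ⟨rfl, rfl⟩ := he
      exact congrArg (fun k => (some (.inr (A', k)) : MV)) (Nat.add_assoc i m 1)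
lemma MS_lab : MS.lab = mlab := rfl

set_option maxHeartbeats 1000000 in
lemma MS_models : CModels MS phi := by
  intro ρ0 hρ0 hI
  have hI' : ρ0 0 = none := hI
  simp only [phi, sat_cj]
  refine ⟨?_, ?_, ?_, ?_, ?_⟩
  · -- C1
    simp only [C1, CTL.sat, a0, a1, Function.update]
    simp [hI']
    intro ρ hρ h0 x
    have hne := mE_ne_none (hρ x)
    simp [CTL.sat]
    rcases hv : ρ (x + 1) with _ | (⟨b, l⟩ | ⟨A, i⟩)
    · exact absurd hv hne
    · cases b <;> simp [MS_lab, mlab]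
    · by_cases hA : i ∈ A <;> simp [MS_lab, mlab, hA]
  · -- C2
    simp [C2, CTL.sat, af, a0, a1, Function.update, hI']
    intro ρ hρ h0 x hf
    rcases hv : ρ (x + 1) with _ | (⟨b, l⟩ | ⟨A, i⟩) <;> rw [hv] at hf
    · exact absurd hf (by simp [MS_lab, mlab])
    · obtain ⟨τ, hτ, hτ0, hτ1⟩ := cons_path
        (v := some (.inl (b, l))) (w := some (.inl (false, b :: l))) (by simp [mE])
      obtain ⟨τ', hτ', hτ'0, hτ'1⟩ := cons_path
        (v := some (.inl (b, l))) (w := some (.inl (true, b :: l))) (by simp [mE])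
      exact ⟨⟨τ, hτ, by rw [hτ0], by rw [hτ1]; simp [MS_lab, mlab],
        by rw [hτ1]; simp [MS_lab, mlab]⟩,
        ⟨τ', hτ', by rw [hτ'0], by rw [hτ'1]; simp [MS_lab, mlab],
        by rw [hτ'1]; simp [MS_lab, mlab]⟩⟩
    · exact absurd hf (by simp [MS_lab, mlab])
  · -- C3
    simp [C3, CTL.sat, af, a0, a1, Function.update, hI']
    constructor
    · obtain ⟨τ, hτ, hτ0, hτ1⟩ := cons_path
        (v := none) (w := some (.inl (false, []))) (by simp [mE])
      exact ⟨τ, hτ, hτ0, by rw [hτ1]; simp [MS_lab, mlab], by rw [hτ1]; simp [MS_lab, mlab]⟩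
    · obtain ⟨τ, hτ, hτ0, hτ1⟩ := cons_path
        (v := none) (w := some (.inl (true, []))) (by simp [mE])
      exact ⟨τ, hτ, hτ0, by rw [hτ1]; simp [MS_lab, mlab], by rw [hτ1]; simp [MS_lab, mlab]⟩
  · -- C4
    simp [C4, CTL.sat, af, a0, a1, ap, Function.update, hI']
    intro ρ hρ h0
    by_cases hall : ∀ x, AP4.fbt ∈ MS.lab (ρ (x + 1))
    · intro _
      refine ⟨fun n => Nat.casesOn n none
          (fun m => some (.inr ({x | AP4.one ∈ MS.lab (ρ (x + 1))}, m))), ?_, h0.symm, ?_, ?_⟩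
      · intro i
        cases i with
        | zero => exact rfl
        | succ m => exact ⟨rfl, rfl⟩
      · simp [MS_lab, mlab]
      · intro x
        have hfx := hall x
        rcases hv : ρ (x + 1) with _ | (⟨b, l⟩ | ⟨A, i⟩) <;> rw [hv] at hfx
        · exact absurd hfx (by simp [MS_lab, mlab])
        · cases b <;> simp [MS_lab, mlab, hv]
        · exact absurd hfx (by simp [MS_lab, mlab])
    · intro h
      exact absurd h hall
  · -- C5
    simp [C5, CTL.sat, a1, ap, Function.update, hI']
    intro ρ hρ h0
    by_cases hp : AP4.pset ∈ MS.lab (ρ 1)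
    · intro _
      have he := hρ 0
      rw [h0] at he
      rcases hv : ρ 1 with _ | (⟨b, l⟩ | ⟨A, i⟩) <;> rw [hv] at hp he
      · exact absurd hp (by simp [MS_lab, mlab])
      · exact absurd hp (by simp [MS_lab, mlab])
      · have hi0 : i = 0 := he
        subst hi0
        intro ρ1 h1 h10 ρ2 h2 h20 x
        have e1 := inr_path h1 A 0 h10 x
        have e2 := inr_path h2 A 0 (h20.trans h10) x
        rw [e1, e2]
    · intro h
      exact absurd h hp
set_option maxHeartbeats 1000000 in
lemma main (S : TS AP4) (hm : CModels S phi) :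
    Cardinal.continuum ≤ Cardinal.mk S.V ∧
    Cardinal.continuum ≤ Cardinal.mk {v : S.V // S.E S.vI v} ∧
    ∃ ρ : Set ℕ → (ℕ → S.V),
      (∀ A : Set ℕ, S.IsPath (ρ A) ∧ S.E S.vI (ρ A 0) ∧
        ∀ i : ℕ, (AP4.one ∈ S.lab (ρ A i) ↔ i ∈ A) ∧
          (AP4.zero ∈ S.lab (ρ A i) ↔ i ∉ A)) ∧
      ∀ A B : Set ℕ, A ≠ B → ρ A 0 ≠ ρ B 0 := by
  classical
  obtain ⟨ρ0, hρ0, hI⟩ := exists_path S S.vI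
  have hsat := hm ρ0 hρ0 hI
  simp only [phi, sat_cj] at hsat
  obtain ⟨h1, h2, h3, h4, h5⟩ := hsat
  simp [C1, CTL.sat, a0, a1, Function.update, hI] at h1
  simp [C2, CTL.sat, af, a0, a1, Function.update, hI] at h2
  simp [C3, CTL.sat, af, a0, a1, Function.update, hI] at h3
  simp [C4, CTL.sat, af, a0, a1, ap, Function.update, hI] at h4
  simp [C5, CTL.sat, a1, ap, Function.update, hI] at h5
  have K1 : ∀ σ, S.IsPath σ → σ 0 = S.vI → ∀ k, 1 ≤ k →
      (AP4.one ∈ S.lab (σ k) ↔ AP4.zero ∉ S.lab (σ k)) := by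
    intro σ hσ h0 k hk
    obtain ⟨j, rfl⟩ : ∃ j, k = j + 1 := ⟨k - 1, by omega⟩
    have := h1 σ hσ h0 j
    tauto
  have key : ∀ A : Set ℕ, ∃ p : ℕ → S.V, S.IsPath p ∧ S.E S.vI (p 0) ∧
      (∀ i, (AP4.one ∈ S.lab (p i) ↔ i ∈ A) ∧ (AP4.zero ∈ S.lab (p i) ↔ i ∉ A)) ∧
      ∃ τ, S.IsPath τ ∧ τ 0 = S.vI ∧ τ 1 = p 0 ∧ AP4.pset ∈ S.lab (p 0) := by
    intro A
    let Q : ℕ → (ℕ → S.V) → Prop := fun n σ =>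
      S.IsPath σ ∧ σ 0 = S.vI ∧ ∀ k, 1 ≤ k → k ≤ n + 1 →
        AP4.fbt ∈ S.lab (σ k) ∧ (AP4.one ∈ S.lab (σ k) ↔ k - 1 ∈ A)
    have base : ∃ σ, Q 0 σ := by
      by_cases h0A : (0 : ℕ) ∈ A
      · obtain ⟨τ, hτ, hτ0, hf, ho⟩ := h3.2
        refine ⟨τ, hτ, hτ0, fun k hk1 hk2 => ?_⟩
        have hk : k = 1 := by omega
        subst hk
        exact ⟨hf, by simpa using iff_of_true ho h0A⟩
      · obtain ⟨τ, hτ, hτ0, hf, hz⟩ := h3.1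
        refine ⟨τ, hτ, hτ0, fun k hk1 hk2 => ?_⟩
        have hk : k = 1 := by omega
        subst hk
        have hone : AP4.one ∉ S.lab (τ 1) := by
          have := K1 τ hτ hτ0 1 (by omega)
          tauto
        exact ⟨hf, by simpa using iff_of_false hone h0A⟩
    have step : ∀ n σ, Q n σ → ∃ σ', Q (n+1) σ' ∧ ∀ i ≤ n+1, σ' i = σ i := by
      intro n σ hQσ
      obtain ⟨hσ, h0, hinv⟩ := hQσ
      have hfbt : AP4.fbt ∈ S.lab (σ (n+1)) := (hinv (n+1) (by omega) (by omega)).1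
      obtain ⟨⟨τ0, hτ0p, hτ00, hτ0f, hτ0z⟩, ⟨τ1, hτ1p, hτ10, hτ1f, hτ1o⟩⟩ := h2 σ hσ h0 n hfbt
      by_cases hnA : n + 1 ∈ A
      · obtain ⟨ρ', hρ', hag, hext⟩ := splice S hσ hτ1p (n+1) hτ10
        have hρ'0 : ρ' 0 = S.vI := by rw [hag 0 (by omega), h0]
        refine ⟨ρ', ⟨hρ', hρ'0, ?_⟩, fun i hi => hag i hi⟩
        intro k hk1 hk2
        rcases Nat.lt_or_ge k (n+2) with hk | hk
        · rw [hag k (by omega)]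
          exact hinv k hk1 (by omega)
        · have hk' : k = n + 2 := by omega
          subst hk'
          have e : ρ' (n+2) = τ1 1 := hext 1
          rw [e]
          refine ⟨hτ1f, ?_⟩
          simpa [show n+2-1 = n+1 from by omega] using iff_of_true hτ1o hnA
      · obtain ⟨ρ', hρ', hag, hext⟩ := splice S hσ hτ0p (n+1) hτ00
        have hρ'0 : ρ' 0 = S.vI := by rw [hag 0 (by omega), h0]
        refine ⟨ρ', ⟨hρ', hρ'0, ?_⟩, fun i hi => hag i hi⟩
        intro k hk1 hk2
        rcases Nat.lt_or_ge k (n+2) with hk | hk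
        · rw [hag k (by omega)]
          exact hinv k hk1 (by omega)
        · have hk' : k = n + 2 := by omega
          subst hk'
          have e : ρ' (n+2) = τ0 1 := hext 1
          have hone : AP4.one ∉ S.lab (ρ' (n+2)) := by
            have := K1 ρ' hρ' hρ'0 (n+2) (by omega)
            rw [e] at this ⊢
            tauto
          rw [e] at hone ⊢
          refine ⟨hτ0f, ?_⟩
          simpa [show n+2-1 = n+1 from by omega] using iff_of_false hone hnA
    obtain ⟨σb, hb⟩ := base
    obtain ⟨σA, hσA⟩ := chain Q σb hb step
    have pPath : S.IsPath σA := by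
      intro i
      obtain ⟨ρ, hQρ, hag⟩ := hσA i
      rw [hag i (by omega), hag (i+1) (by omega)]
      exact hQρ.1 i
    have p0 : σA 0 = S.vI := by
      obtain ⟨ρ, hQρ, hag⟩ := hσA 0
      rw [hag 0 (by omega)]
      exact hQρ.2.1
    have pLab : ∀ k, 1 ≤ k →
        AP4.fbt ∈ S.lab (σA k) ∧ (AP4.one ∈ S.lab (σA k) ↔ k - 1 ∈ A) := by
      intro k hk
      obtain ⟨ρ, hQρ, hag⟩ := hσA k
      rw [hag k (by omega)]
      exact hQρ.2.2 k hk (by omega)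
    rcases (imp_iff_not_or.mp (h4 σA pPath p0)).imp_left not_forall.mp with ⟨x, hx⟩ | ⟨τ, hτp, hτ0, hτpset, hτlab⟩
    · exact absurd (pLab (x+1) (by omega)).1 hx
    · have τvI : τ 0 = S.vI := by rw [hτ0, p0]
      refine ⟨fun i => τ (i+1), fun i => hτp (i+1), ?_, ?_, τ, hτp, τvI, rfl, hτpset⟩
      · have := hτp 0
        rwa [τvI] at this
      · intro i
        show (AP4.one ∈ S.lab (τ (i+1)) ↔ i ∈ A) ∧ (AP4.zero ∈ S.lab (τ (i+1)) ↔ i ∉ A)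
        have hmatch := hτlab i
        have hσone := (pLab (i+1) (by omega)).2
        simp only [Nat.add_sub_cancel] at hσone
        have hzτ := K1 τ hτp τvI (i+1) (by omega)
        have hzσ := K1 σA pPath p0 (i+1) (by omega)
        constructor
        · tauto
        · tauto
  choose p hp using key
  have hdist : ∀ A B : Set ℕ, A ≠ B → p A 0 ≠ p B 0 := by
    intro A B hne heq
    obtain ⟨τ, hτp, hτ0, hτ1, hτpset⟩ := (hp A).2.2.2
    rcases imp_iff_not_or.mp (h5 τ hτp hτ0) with hnp | hcong
    · rw [hτ1] at hnp
      exact hnp hτpset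
    · have hx := hcong (p A) (hp A).1 hτ1.symm (p B) (hp B).1 heq.symm
      apply hne
      ext x
      have h' := hx x
      have hA := ((hp A).2.2.1 x).1
      have hB := ((hp B).2.2.1 x).1
      tauto
  have hinj : Function.Injective
      (fun A : Set ℕ => (⟨p A 0, (hp A).2.1⟩ : {v : S.V // S.E S.vI v})) := by
    intro A B h
    by_contra hne
    exact hdist A B hne (congrArg Subtype.val h)
  have hcont : Cardinal.continuum ≤ Cardinal.mk {v : S.V // S.E S.vI v} := by
    have := Cardinal.mk_le_of_injective hinj
    rwa [Cardinal.mk_set, Cardinal.mk_nat, Cardinal.two_power_aleph0] at this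
  exact ⟨hcont.trans (Cardinal.mk_subtype_le _), hcont, p,
    fun A => ⟨(hp A).1, (hp A).2.1, (hp A).2.2.1⟩, hdist⟩

lemma phi_sentence : phi.IsSentence := by
  constructor
  · ext n
    simp [phi, C1, C2, C3, C4, C5, cj, im, iff', Gl, tru, a0, a1, af, ap, CTL.freeVars]
  · simp [phi, C1, C2, C3, C4, C5, cj, CTL.guarded]
end HyperAux

/-- **A satisfiable HyperCTL* sentence all of whose models have at least `𝔠`
vertices**: every model contains, for each `A ⊆ ℕ`, a path `ρ_A` starting at a
successor of the initial vertex whose `i`-th vertex is labelled `1` iff `i ∈ A`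
(and `0` otherwise), with pairwise distinct first vertices; in particular the
initial vertex has at least `𝔠` successors. -/
theorem hyperctl_continuum_lower_bound :
    ∃ φ : CTL AP4, φ.IsSentence ∧ (∃ S : TS AP4, CModels S φ) ∧
      ∀ S : TS AP4, CModels S φ →
        Cardinal.continuum ≤ Cardinal.mk S.V ∧
        Cardinal.continuum ≤ Cardinal.mk {v : S.V // S.E S.vI v} ∧
        ∃ ρ : Set ℕ → (ℕ → S.V),
          (∀ A : Set ℕ, S.IsPath (ρ A) ∧ S.E S.vI (ρ A 0) ∧
            ∀ i : ℕ, (AP4.one ∈ S.lab (ρ A i) ↔ i ∈ A) ∧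
              (AP4.zero ∈ S.lab (ρ A i) ↔ i ∉ A)) ∧
          ∀ A B : Set ℕ, A ≠ B → ρ A 0 ≠ ρ B 0 := by
  exact ⟨HyperAux.phi, HyperAux.phi_sentence, ⟨HyperAux.MS, HyperAux.MS_models⟩,
    HyperAux.main⟩
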